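/- Let A and B be Banach algebras each possessing a bounded approximate identity, and let α be a subcross norm on A ⊗ B (i.e., α(a ⊗ b) ≤ ‖a‖‖b‖) making the completion A ⊗^α B a Banach algebra. Then A ⊗^α B possesses a bounded approximate identity. -/

import Mathlib

open Filter

/-- A bounded approximate identity for a subset `I` of a normed ring. -/
def BoundedApproxIdentity {A : Type*} [NonUnitalNormedRing A] (I : Set A) : Prop :=
  ∃ (ι : Type) (l : Filter ι) (e : ι → A), l.NeBot ∧ (∀ i, e i ∈ I) ∧
    (∃ C : ℝ, ∀ i, ‖e i‖ ≤ C) ∧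
    ∀ x ∈ I, Filter.Tendsto (fun i => e i * x) l (nhds x) ∧
      Filter.Tendsto (fun i => x * e i) l (nhds x)

/-- If Banach algebras `A` and `B` possess bounded approximate identities, then the
completion `C = A ⊗^α B` of their algebraic tensor product with respect to any
subcross norm `α` (modelled by a Banach algebra `C` together with a bilinear
multiplicative map `m : A → B → C` with `‖m a b‖ ≤ ‖a‖‖b‖` and dense span image)
possesses a bounded approximate identity. -/
theorem tensorProduct_boundedApproxIdentity
    {A B C : Type*}
    [NonUnitalNormedRing A] [NormedSpace ℂ A]
    [NonUnitalNormedRing B] [NormedSpace ℂ B]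
    [NonUnitalNormedRing C] [NormedSpace ℂ C] [CompleteSpace C]
    (m : A →ₗ[ℂ] B →ₗ[ℂ] C)
    (hmul : ∀ (a a' : A) (b b' : B), m a b * m a' b' = m (a * a') (b * b'))
    (hcross : ∀ (a : A) (b : B), ‖m a b‖ ≤ ‖a‖ * ‖b‖)
    (hdense : Dense (Submodule.span ℂ {x : C | ∃ a b, x = m a b} : Set C))
    (hA : BoundedApproxIdentity (Set.univ : Set A))
    (hB : BoundedApproxIdentity (Set.univ : Set B)) :
    BoundedApproxIdentity (Set.univ : Set C) := by
  obtain ⟨ιA, lA, eA, hlA, -, ⟨CA, hCA⟩, hA'⟩ := hA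
  obtain ⟨ιB, lB, eB, hlB, -, ⟨CB, hCB⟩, hB'⟩ := hB
  haveI := hlA; haveI := hlB
  have hιA : Nonempty ιA := nonempty_of_neBot lA
  have hιB : Nonempty ιB := nonempty_of_neBot lB
  have hCA0 : 0 ≤ CA := le_trans (norm_nonneg _) (hCA hιA.some)
  have hCB0 : 0 ≤ CB := le_trans (norm_nonneg _) (hCB hιB.some)
  set T : Set C := {x : C | ∃ a b, x = m a b} with hT
  set l : Filter (ιA × ιB) := lA ×ˢ lB with hl
  set e : ιA × ιB → C := fun p => m (eA p.1) (eB p.2) with he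
  -- continuity of m as a bilinear map
  have hm : Continuous (fun q : A × B => m q.1 q.2) := by
    have : IsBoundedBilinearMap ℂ (fun q : A × B => m q.1 q.2) := by
      refine
        { add_left := fun a a' b => by simp,
          smul_left := fun c a b => by simp,
          add_right := fun a b b' => by simp,
          smul_right := fun c a b => by simp,
          bound := ⟨1, one_pos, fun a b => by simpa using hcross a b⟩ }
    exact this.continuous
  -- the scalar closure of T under smul
  have hsmul : ∀ (c : ℂ) (y : C), y ∈ AddSubmonoid.closure T →
      c • y ∈ AddSubmonoid.closure T := by
    intro c y hy
    induction hy using AddSubmonoid.closure_induction with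
    | mem y hy =>
      obtain ⟨a, b, rfl⟩ := hy
      exact AddSubmonoid.subset_closure ⟨c • a, b, by simp⟩
    | zero => simpa using AddSubmonoid.zero_mem _
    | add y z _ _ ihy ihz => rw [smul_add]; exact AddSubmonoid.add_mem _ ihy ihz
  have hspan : (Submodule.span ℂ T : Set C) ⊆ (AddSubmonoid.closure T : Set C) := by
    intro x hx
    induction hx using Submodule.span_induction with
    | mem x hx => exact AddSubmonoid.subset_closure hx
    | zero => exact AddSubmonoid.zero_mem _
    | add x y _ _ ihx ihy => exact AddSubmonoid.add_mem _ ihx ihy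
    | smul c x _ ihx => exact hsmul c x ihx
  have hdense' : Dense ((AddSubmonoid.closure T : Set C)) := hdense.mono hspan
  -- key convergence on the additive closure of elementary tensors
  have key : ∀ x ∈ AddSubmonoid.closure T,
      Tendsto (fun p => e p * x) l (nhds x) ∧ Tendsto (fun p => x * e p) l (nhds x) := by
    intro x hx
    induction hx using AddSubmonoid.closure_induction with
    | mem x hx =>
      obtain ⟨a, b, rfl⟩ := hx
      constructor
      · have h1 : Tendsto (fun p : ιA × ιB => (eA p.1 * a, eB p.2 * b)) l (nhds (a, b)) :=
          by
          rw [nhds_prod_eq]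
          exact Tendsto.prodMk ((hA' a trivial).1.comp tendsto_fst)
            ((hB' b trivial).1.comp tendsto_snd)
        have := (hm.tendsto (a, b)).comp h1
        simpa [he, hmul, Function.comp_def] using this
      · have h1 : Tendsto (fun p : ιA × ιB => (a * eA p.1, b * eB p.2)) l (nhds (a, b)) :=
          by
          rw [nhds_prod_eq]
          exact Tendsto.prodMk ((hA' a trivial).2.comp tendsto_fst)
            ((hB' b trivial).2.comp tendsto_snd)
        have := (hm.tendsto (a, b)).comp h1
        simpa [he, hmul, Function.comp_def] using this
    | zero =>
      constructor <;> simp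
    | add x y _ _ ihx ihy =>
      constructor
      · have := ihx.1.add ihy.1
        simpa [mul_add] using this
      · have := ihx.2.add ihy.2
        simpa [add_mul] using this
  -- bound on the net
  have hbound : ∀ p : ιA × ιB, ‖e p‖ ≤ CA * CB := by
    intro p
    calc ‖e p‖ ≤ ‖eA p.1‖ * ‖eB p.2‖ := hcross _ _
      _ ≤ CA * CB := mul_le_mul (hCA _) (hCB _) (norm_nonneg _) hCA0
  set CC : ℝ := CA * CB with hCC
  have hCC0 : 0 ≤ CC := mul_nonneg hCA0 hCB0
  refine ⟨ιA × ιB, l, e, Filter.prod_neBot.2 ⟨hlA, hlB⟩, fun _ => trivial,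
    ⟨CC, hbound⟩, ?_⟩
  intro x _
  constructor
  · rw [Metric.tendsto_nhds]
    intro ε hε
    obtain ⟨y, hyT, hxy⟩ := Metric.mem_closure_iff.1 (hdense' x) (ε / (2 * (CC + 1)))
      (by positivity)
    have hy := (key y hyT).1
    filter_upwards [Metric.tendsto_nhds.1 hy (ε / 2) (by positivity)] with p hp
    have h1 : dist (e p * x) (e p * y) ≤ CC * dist x y := by
      rw [dist_eq_norm, dist_eq_norm, ← mul_sub]
      calc ‖e p * (x - y)‖ ≤ ‖e p‖ * ‖x - y‖ := norm_mul_le _ _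
        _ ≤ CC * ‖x - y‖ := mul_le_mul_of_nonneg_right (hbound p) (norm_nonneg _)
    have hne : (CC : ℝ) + 1 ≠ 0 := by positivity
    have hδ : CC * (ε / (2 * (CC + 1))) + ε / (2 * (CC + 1)) = ε / 2 := by
      field_simp
    have hmul2 : CC * dist x y ≤ CC * (ε / (2 * (CC + 1))) :=
      mul_le_mul_of_nonneg_left hxy.le hCC0
    have htri : dist (e p * x) x ≤
        dist (e p * x) (e p * y) + dist (e p * y) y + dist y x :=
      dist_triangle4 _ _ _ _
    rw [dist_comm y x] at htri
    linarith [h1, hp, hxy]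
  · rw [Metric.tendsto_nhds]
    intro ε hε
    obtain ⟨y, hyT, hxy⟩ := Metric.mem_closure_iff.1 (hdense' x) (ε / (2 * (CC + 1)))
      (by positivity)
    have hy := (key y hyT).2
    filter_upwards [Metric.tendsto_nhds.1 hy (ε / 2) (by positivity)] with p hp
    have h1 : dist (x * e p) (y * e p) ≤ CC * dist x y := by
      rw [dist_eq_norm, dist_eq_norm, ← sub_mul]
      calc ‖(x - y) * e p‖ ≤ ‖x - y‖ * ‖e p‖ := norm_mul_le _ _
        _ ≤ ‖x - y‖ * CC := mul_le_mul_of_nonneg_left (hbound p) (norm_nonneg _)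
        _ = CC * ‖x - y‖ := mul_comm _ _
    have hne : (CC : ℝ) + 1 ≠ 0 := by positivity
    have hδ : CC * (ε / (2 * (CC + 1))) + ε / (2 * (CC + 1)) = ε / 2 := by
      field_simp
    have hmul2 : CC * dist x y ≤ CC * (ε / (2 * (CC + 1))) :=
      mul_le_mul_of_nonneg_left hxy.le hCC0
    have htri : dist (x * e p) x ≤
        dist (x * e p) (y * e p) + dist (y * e p) y + dist y x :=
      dist_triangle4 _ _ _ _
    rw [dist_comm y x] at htri
    linarith [h1, hp, hxy]
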